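/- Let φ : F → ℝ be locally Lipschitz. Then for each finite subset ϕ of F, the function λ_{φ,ϕ} : F → [0,∞), λ_{φ,ϕ}(f) = min_{y ∈ ∂φ(f)} ρ_ϕ(y), is sequentially lower semicontinuous: if f_n → f₀ in F, then λ_{φ,ϕ}(f₀) ≤ liminf_n λ_{φ,ϕ}(f_n). -/

import Mathlib

/- Setting: `F` (and `E`) are Fréchet spaces: complete topological vector spaces over ℝ
whose topology is generated by an increasing sequence of seminorms `p 0 ≤ p 1 ≤ ⋯`
(`Monotone p` together with `WithSeminorms p`).  The first seminorm of the family,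
written `‖·‖¹` in the paper, is `p 0`.  The dual `F'` with its weak* topology is
`WeakDual ℝ F`. -/

open Filter Topology

section Defs

variable {E F : Type*}
  [AddCommGroup E] [Module ℝ E] [UniformSpace E] [IsUniformAddGroup E] [ContinuousSMul ℝ E]
  [AddCommGroup F] [Module ℝ F] [UniformSpace F] [IsUniformAddGroup F] [ContinuousSMul ℝ F]

/-- Clarke's generalized directional derivative
`φ°(f;g) = limsup_{h → f, t ↓ 0} (φ(h+tg) − φ(h))/t`. -/
noncomputable def clarkeDeriv (φ : F → ℝ) (f g : F) : ℝ :=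
  Filter.limsup (fun q : F × ℝ => (φ (q.1 + q.2 • g) - φ q.1) / q.2)
    ((𝓝 f) ×ˢ (𝓝[>] (0 : ℝ)))

/-- The Clarke subdifferential `∂φ(f) = {f' ∈ F' : ⟨f',g⟩ ≤ φ°(f;g) ∀ g}`, a subset of
the dual equipped with the weak* topology. -/
def clarkeSubdiff (φ : F → ℝ) (f : F) : Set (WeakDual ℝ F) :=
  {u | ∀ g : F, u g ≤ clarkeDeriv φ f g}

/-- Locally Lipschitz with respect to the first seminorm `p 0` of the defining
increasing family of seminorms (as used throughout the paper). -/
def LocLip (p : ℕ → Seminorm ℝ F) (φ : F → ℝ) : Prop :=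
  ∀ x : F, ∃ U ∈ 𝓝 x, ∃ K : ℝ, 0 ≤ K ∧ ∀ a ∈ U, ∀ b ∈ U, |φ a - φ b| ≤ K * (p 0) (a - b)

/-- The weak* seminorm `ρ_ϕ(y) = sup_{x ∈ ϕ} |y x|` attached to a finite set `ϕ`. -/
noncomputable def dualSeminorm (s : Finset F) (y : WeakDual ℝ F) : ℝ :=
  ⨆ x ∈ s, |y x|

/-- `λ_{φ,ϕ}(f) = min_{y ∈ ∂φ(f)} ρ_ϕ(y)`. -/
noncomputable def lam (φ : F → ℝ) (s : Finset F) (f : F) : ℝ :=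
  sInf (dualSeminorm s '' clarkeSubdiff φ f)

/-- The Chang Palais–Smale condition. -/
def ChangPS (φ : F → ℝ) : Prop :=
  ∀ u : ℕ → F, (∃ C : ℝ, ∀ n, |φ (u n)| ≤ C) →
    (∀ s : Finset F, Tendsto (fun n => lam φ s (u n)) atTop (𝓝 0)) →
    ∃ g : ℕ → ℕ, StrictMono g ∧ ∃ x : F, Tendsto (u ∘ g) atTop (𝓝 x)

/-- The Chang Palais–Smale condition at level `c`. -/
def ChangPSAt (φ : F → ℝ) (c : ℝ) : Prop :=
  ∀ u : ℕ → F, Tendsto (fun n => φ (u n)) atTop (𝓝 c) →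
    (∀ s : Finset F, Tendsto (fun n => lam φ s (u n)) atTop (𝓝 0)) →
    ∃ g : ℕ → ℕ, StrictMono g ∧ ∃ x : F, Tendsto (u ∘ g) atTop (𝓝 x)

/-- Keller `C¹_c` on a set `U`, with derivative family `D`: directional derivatives exist,
each `D x` is continuous linear, and `(x,h) ↦ D x h` is jointly continuous. -/
def C1cOn (τ : E → F) (D : E → (E →L[ℝ] F)) (U : Set E) : Prop :=
  (∀ x ∈ U, ∀ h : E,
      Tendsto (fun t : ℝ => t⁻¹ • (τ (x + t • h) - τ x)) (𝓝[≠] (0 : ℝ)) (𝓝 (D x h))) ∧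
  ContinuousOn (fun q : E × E => D q.1 q.2) (U ×ˢ (Set.univ : Set E))

/-- Keller `C¹_c` on a set (derivative existential). -/
def IsC1cOn (τ : E → F) (U : Set E) : Prop :=
  ∃ D : E → (E →L[ℝ] F), C1cOn τ D U

/-- Local `C¹_c`-diffeomorphism: every point has an open neighbourhood mapped bijectively
onto an open set, `τ` being `C¹_c` there with a `C¹_c` inverse. -/
def IsLocalC1cDiffeo (τ : E → F) : Prop :=
  ∀ x : E, ∃ U : Set E, IsOpen U ∧ x ∈ U ∧ ∃ V : Set F, IsOpen V ∧ Set.BijOn τ U V ∧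
    IsC1cOn τ U ∧ ∃ σ : F → E, (∀ y ∈ V, τ (σ y) = y) ∧ (∀ x' ∈ U, σ (τ x') = x') ∧
      IsC1cOn σ V

end Defs
section Aux

open Filter Topology

variable {F : Type*} [AddCommGroup F] [Module ℝ F] [UniformSpace F] [IsUniformAddGroup F]
  [ContinuousSMul ℝ F]

/-- The difference quotient appearing in the Clarke derivative. -/
noncomputable def auxDQ (φ : F → ℝ) (g : F) : F × ℝ → ℝ :=
  fun q => (φ (q.1 + q.2 • g) - φ q.1) / q.2

lemma auxDQ_limsup (φ : F → ℝ) (f g : F) :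
    clarkeDeriv φ f g = Filter.limsup (auxDQ φ g) ((𝓝 f) ×ˢ (𝓝[>] (0:ℝ))) := rfl

lemma aux_tendsto_shift (f g : F) :
    Tendsto (fun q : F × ℝ => (q.1 + q.2 • g, q.2)) ((𝓝 f) ×ˢ (𝓝[>] (0:ℝ)))
      ((𝓝 f) ×ˢ (𝓝[>] (0:ℝ))) := by
  apply Tendsto.prodMk
  · have h2 : Tendsto (fun q : F × ℝ => q.2) ((𝓝 f) ×ˢ (𝓝[>] (0:ℝ))) (𝓝 (0:ℝ)) :=
      tendsto_snd.mono_right nhdsWithin_le_nhds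
    have := tendsto_fst.add (h2.smul_const g)
    simpa using this
  · exact tendsto_snd

lemma aux_ev_bound (p0 : Seminorm ℝ F) {φ : F → ℝ} {U : Set F} {K : ℝ} {f : F}
    (hU : U ∈ 𝓝 f) (hL : ∀ a ∈ U, ∀ b ∈ U, |φ a - φ b| ≤ K * p0 (a - b)) (g : F) :
    ∀ᶠ q in (𝓝 f) ×ˢ (𝓝[>] (0:ℝ)), |auxDQ φ g q| ≤ K * p0 g := by
  have h1 : Tendsto (fun q : F × ℝ => q.1) ((𝓝 f) ×ˢ (𝓝[>] (0:ℝ))) (𝓝 f) := tendsto_fst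
  have h2 : Tendsto (fun q : F × ℝ => q.1 + q.2 • g) ((𝓝 f) ×ˢ (𝓝[>] (0:ℝ))) (𝓝 f) :=
    tendsto_fst.comp (aux_tendsto_shift f g)
  have h3 : ∀ᶠ q : F × ℝ in (𝓝 f) ×ˢ (𝓝[>] (0:ℝ)), q.2 ∈ Set.Ioi (0:ℝ) :=
    tendsto_snd.eventually eventually_mem_nhdsWithin
  filter_upwards [h1.eventually_mem hU, h2.eventually_mem hU, h3] with q hq1 hq2 hq3
  have ht : (0:ℝ) < q.2 := hq3
  have hnum : |φ (q.1 + q.2 • g) - φ q.1| ≤ K * (q.2 * p0 g) := by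
    have h := hL _ hq2 _ hq1
    have heq : (q.1 + q.2 • g) - q.1 = q.2 • g := by abel
    rw [heq, map_smul_eq_mul, Real.norm_eq_abs, abs_of_pos ht] at h
    exact h
  have habs : |auxDQ φ g q| = |φ (q.1 + q.2 • g) - φ q.1| / q.2 := by
    rw [auxDQ, abs_div, abs_of_pos ht]
  rw [habs, div_le_iff₀ ht]
  calc |φ (q.1 + q.2 • g) - φ q.1| ≤ K * (q.2 * p0 g) := hnum
    _ = K * p0 g * q.2 := by ring

lemma aux_bddAbove (p0 : Seminorm ℝ F) {φ : F → ℝ} {U : Set F} {K : ℝ} {f : F}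
    (hU : U ∈ 𝓝 f) (hL : ∀ a ∈ U, ∀ b ∈ U, |φ a - φ b| ≤ K * p0 (a - b)) (g : F) :
    IsBoundedUnder (· ≤ ·) ((𝓝 f) ×ˢ (𝓝[>] (0:ℝ))) (auxDQ φ g) :=
  ⟨K * p0 g, by
    rw [Filter.eventually_map]
    filter_upwards [aux_ev_bound p0 hU hL g] with q hq using (abs_le.1 hq).2⟩

lemma aux_bddBelow (p0 : Seminorm ℝ F) {φ : F → ℝ} {U : Set F} {K : ℝ} {f : F}
    (hU : U ∈ 𝓝 f) (hL : ∀ a ∈ U, ∀ b ∈ U, |φ a - φ b| ≤ K * p0 (a - b)) (g : F) :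
    IsBoundedUnder (· ≥ ·) ((𝓝 f) ×ˢ (𝓝[>] (0:ℝ))) (auxDQ φ g) :=
  ⟨-(K * p0 g), by
    rw [Filter.eventually_map]
    filter_upwards [aux_ev_bound p0 hU hL g] with q hq using (abs_le.1 hq).1⟩

lemma aux_clarkeDeriv_le (p0 : Seminorm ℝ F) {φ : F → ℝ} {U : Set F} {K : ℝ} {f : F}
    (hU : U ∈ 𝓝 f) (hL : ∀ a ∈ U, ∀ b ∈ U, |φ a - φ b| ≤ K * p0 (a - b)) (g : F) :
    clarkeDeriv φ f g ≤ K * p0 g := by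
  rw [auxDQ_limsup]
  refine limsup_le_of_le ((aux_bddBelow p0 hU hL g).isCoboundedUnder_le) ?_
  filter_upwards [aux_ev_bound p0 hU hL g] with q hq using (abs_le.1 hq).2

lemma aux_clarkeDeriv_zero (φ : F → ℝ) (f : F) : clarkeDeriv φ f 0 = 0 := by
  have h : clarkeDeriv φ f 0 =
      Filter.limsup (fun _ : F × ℝ => (0:ℝ)) ((𝓝 f) ×ˢ (𝓝[>] (0:ℝ))) := by
    rw [auxDQ_limsup]
    congr 1
    funext q
    simp [auxDQ]
  rw [h, limsup_const]

lemma aux_limsup_map {α β : Type*} (u : α → ℝ) (m : β → α) (l : Filter β) :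
    Filter.limsup u (Filter.map m l) = Filter.limsup (fun x => u (m x)) l := by
  rw [Filter.limsup, Filter.limsup, Filter.map_map]
  rfl

/-- Subadditivity of the Clarke derivative in the direction. -/
lemma aux_clarkeDeriv_add (p0 : Seminorm ℝ F) {φ : F → ℝ} {U : Set F} {K : ℝ} {f : F}
    (hU : U ∈ 𝓝 f) (hL : ∀ a ∈ U, ∀ b ∈ U, |φ a - φ b| ≤ K * p0 (a - b)) (g₁ g₂ : F) :
    clarkeDeriv φ f (g₁ + g₂) ≤ clarkeDeriv φ f g₁ + clarkeDeriv φ f g₂ := by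
  set l := (𝓝 f) ×ˢ (𝓝[>] (0:ℝ)) with hl
  set T : F × ℝ → F × ℝ := fun q => (q.1 + q.2 • g₂, q.2) with hT
  have hTt : Tendsto T l l := aux_tendsto_shift f g₂
  set v : F × ℝ → ℝ := fun q => auxDQ φ g₁ (T q) with hv
  have hsplit : auxDQ φ (g₁ + g₂) = fun q => v q + auxDQ φ g₂ q := by
    funext q
    simp only [auxDQ, hv, hT]
    have h1 : q.1 + q.2 • (g₁ + g₂) = (q.1 + q.2 • g₂) + q.2 • g₁ := by
      rw [smul_add]; abel
    rw [h1, ← add_div]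
    ring_nf
  -- bounds for v
  have hvb : ∀ᶠ q in l, |v q| ≤ K * p0 g₁ := hTt.eventually (aux_ev_bound p0 hU hL g₁)
  have hvba : IsBoundedUnder (· ≤ ·) l v :=
    ⟨K * p0 g₁, by
      rw [Filter.eventually_map]
      filter_upwards [hvb] with q hq using (abs_le.1 hq).2⟩
  have hvbb : IsBoundedUnder (· ≥ ·) l v :=
    ⟨-(K * p0 g₁), by
      rw [Filter.eventually_map]
      filter_upwards [hvb] with q hq using (abs_le.1 hq).1⟩
  -- limsup of v is at most the Clarke derivative in direction g₁
  have hvle : Filter.limsup v l ≤ clarkeDeriv φ f g₁ := by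
    have h1 : Filter.limsup v l = Filter.limsup (auxDQ φ g₁) (Filter.map T l) :=
      (aux_limsup_map (auxDQ φ g₁) T l).symm
    have hcob : (Filter.map T l).IsCoboundedUnder (· ≤ ·) (auxDQ φ g₁) := by
      refine IsBoundedUnder.isCoboundedUnder_le ?_
      refine ⟨-(K * p0 g₁), ?_⟩
      rw [Filter.eventually_map, Filter.eventually_map]
      filter_upwards [hvb] with q hq using (abs_le.1 hq).1
    rw [h1, auxDQ_limsup]
    exact limsup_le_limsup_of_le hTt hcob (aux_bddAbove p0 hU hL g₁)
  -- epsilon argument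
  have key : ∀ ε : ℝ, 0 < ε →
      clarkeDeriv φ f (g₁ + g₂) ≤ clarkeDeriv φ f g₁ + clarkeDeriv φ f g₂ + ε := by
    intro ε hε
    have hv_lt : ∀ᶠ q in l, v q < clarkeDeriv φ f g₁ + ε / 2 := by
      refine eventually_lt_of_limsup_lt ?_ hvba
      calc Filter.limsup v l ≤ clarkeDeriv φ f g₁ := hvle
        _ < clarkeDeriv φ f g₁ + ε / 2 := by linarith
    have hw_lt : ∀ᶠ q in l, auxDQ φ g₂ q < clarkeDeriv φ f g₂ + ε / 2 := by
      refine eventually_lt_of_limsup_lt ?_ (aux_bddAbove p0 hU hL g₂)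
      rw [← auxDQ_limsup]
      linarith
    rw [auxDQ_limsup, hsplit]
    refine limsup_le_of_le ?_ ?_
    · refine IsBoundedUnder.isCoboundedUnder_le ?_
      obtain ⟨b2, hb2⟩ := aux_bddBelow p0 hU hL g₂
      refine ⟨-(K * p0 g₁) + b2, ?_⟩
      rw [Filter.eventually_map]
      rw [Filter.eventually_map] at hb2
      filter_upwards [hvb, hb2] with q h1 h2
      exact add_le_add (abs_le.1 h1).1 h2
    · filter_upwards [hv_lt, hw_lt] with q h1 h2
      have := add_lt_add h1 h2
      linarith
  by_contra hcon
  push_neg at hcon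
  have h2 := key ((clarkeDeriv φ f (g₁ + g₂) - (clarkeDeriv φ f g₁ + clarkeDeriv φ f g₂)) / 2)
    (by linarith)
  linarith

lemma aux_map_mul_Ioi {c : ℝ} (hc : 0 < c) :
    Filter.map (fun t : ℝ => c * t) (𝓝[>] (0:ℝ)) = 𝓝[>] (0:ℝ) := by
  have key : ∀ d : ℝ, 0 < d → Tendsto (fun t : ℝ => d * t) (𝓝[>] (0:ℝ)) (𝓝[>] (0:ℝ)) := by
    intro d hd
    apply tendsto_nhdsWithin_of_tendsto_nhds_of_eventually_within
    · have h := (continuous_mul_left d).tendsto (0:ℝ)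
      rw [mul_zero] at h
      exact h.mono_left nhdsWithin_le_nhds
    · filter_upwards [eventually_mem_nhdsWithin] with t ht
      exact mul_pos hd ht
  refine le_antisymm (key c hc) ?_
  calc 𝓝[>] (0:ℝ)
      = Filter.map (fun t : ℝ => c * t) (Filter.map (fun t : ℝ => c⁻¹ * t) (𝓝[>] (0:ℝ))) := by
        rw [Filter.map_map]
        have h : ((fun t : ℝ => c * t) ∘ fun t : ℝ => c⁻¹ * t) = id := by
          funext t
          simp [← mul_assoc, mul_inv_cancel₀ hc.ne']
        rw [h, Filter.map_id]
    _ ≤ Filter.map (fun t : ℝ => c * t) (𝓝[>] (0:ℝ)) :=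
        Filter.map_mono (key c⁻¹ (by positivity))

/-- Positive homogeneity of the Clarke derivative in the direction. -/
lemma aux_clarkeDeriv_smul (p0 : Seminorm ℝ F) {φ : F → ℝ} {U : Set F} {K : ℝ} {f : F}
    (hU : U ∈ 𝓝 f) (hL : ∀ a ∈ U, ∀ b ∈ U, |φ a - φ b| ≤ K * p0 (a - b))
    {c : ℝ} (hc : 0 < c) (g : F) :
    clarkeDeriv φ f (c • g) = c * clarkeDeriv φ f g := by
  set S : F × ℝ → F × ℝ := fun q => (q.1, c * q.2) with hS
  have hmapS : Filter.map S ((𝓝 f) ×ˢ (𝓝[>] (0:ℝ))) = (𝓝 f) ×ˢ (𝓝[>] (0:ℝ)) := by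
    have h2 := Filter.prod_map_map_eq (m₁ := fun x : F => x) (m₂ := fun t : ℝ => c * t)
        (f₁ := 𝓝 f) (f₂ := 𝓝[>] (0:ℝ))
    rw [Filter.map_id', aux_map_mul_Ioi hc] at h2
    exact h2.symm
  have hfun : auxDQ φ (c • g) = fun q => c * auxDQ φ g (S q) := by
    funext q
    simp only [auxDQ, hS]
    have h1 : q.2 • (c • g) = (c * q.2) • g := by rw [smul_smul, mul_comm]
    rw [h1, mul_div_assoc', mul_div_mul_left _ _ hc.ne']
  have hbdd := aux_bddAbove p0 hU hL g
  have hcob := (aux_bddBelow p0 hU hL g).isCoboundedUnder_le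
  have hmono : Monotone (fun r : ℝ => c * r) := fun a b h => mul_le_mul_of_nonneg_left h hc.le
  have hmain' : c * Filter.limsup (auxDQ φ g) ((𝓝 f) ×ˢ (𝓝[>] (0:ℝ)))
      = Filter.limsup (fun q => c * auxDQ φ g q) ((𝓝 f) ×ˢ (𝓝[>] (0:ℝ))) :=
    hmono.map_limsup_of_continuousAt (a := auxDQ φ g)
      ((continuous_mul_left c).continuousAt) hbdd hcob
  have hstep : Filter.limsup (fun q => c * auxDQ φ g (S q)) ((𝓝 f) ×ˢ (𝓝[>] (0:ℝ)))
      = Filter.limsup (fun q => c * auxDQ φ g q)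
          (Filter.map S ((𝓝 f) ×ˢ (𝓝[>] (0:ℝ)))) :=
    (aux_limsup_map (fun q => c * auxDQ φ g q) S _).symm
  rw [auxDQ_limsup, auxDQ_limsup, hfun, hstep, hmapS, ← hmain']

lemma aux_cont_of_bound (p0 : Seminorm ℝ F) (hp0 : Continuous p0) (g : F →ₗ[ℝ] ℝ) {K : ℝ}
    (hg : ∀ x, |g x| ≤ K * p0 x) : Continuous g := by
  rw [continuous_iff_continuousAt]
  intro x
  have h0 : Tendsto (fun y => g (y - x)) (𝓝 x) (𝓝 0) := by
    have hb : Tendsto (fun y : F => K * p0 (y - x)) (𝓝 x) (𝓝 0) := by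
      have hsub : Tendsto (fun y : F => y - x) (𝓝 x) (𝓝 0) := by
        have := (continuous_id.sub (continuous_const (y := x))).tendsto x
        simpa [Pi.sub_def] using this
      have h2 := (hp0.tendsto 0).comp hsub
      have h3 := h2.const_mul K
      simpa using h3
    exact squeeze_zero_norm (fun y => by simpa [Real.norm_eq_abs] using hg (y - x)) hb
  have h1 : Tendsto (fun y => g (y - x) + g x) (𝓝 x) (𝓝 (0 + g x)) := h0.add tendsto_const_nhds
  rw [zero_add] at h1
  have hfun : (fun y => g (y - x) + g x) = fun y => g y := by
    funext y
    rw [map_sub]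
    ring
  rw [hfun] at h1
  exact h1

lemma aux_exists_subdiff (p0 : Seminorm ℝ F) (hp0 : Continuous p0)
    {φ : F → ℝ} {U : Set F} {K : ℝ} {f : F} (hU : U ∈ 𝓝 f)
    (hL : ∀ a ∈ U, ∀ b ∈ U, |φ a - φ b| ≤ K * p0 (a - b)) :
    ∃ y : WeakDual ℝ F, y ∈ clarkeSubdiff φ f ∧ ∀ x, |y x| ≤ K * p0 x := by
  have hhom : ∀ c : ℝ, 0 < c → ∀ x : F, clarkeDeriv φ f (c • x) = c * clarkeDeriv φ f x :=
    fun c hc x => aux_clarkeDeriv_smul p0 hU hL hc x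
  have hadd : ∀ x y : F, clarkeDeriv φ f (x + y) ≤ clarkeDeriv φ f x + clarkeDeriv φ f y :=
    fun x y => aux_clarkeDeriv_add p0 hU hL x y
  have hdom : ∀ x : ((⟨⊥, 0⟩ : F →ₗ.[ℝ] ℝ)).domain,
      (⟨⊥, 0⟩ : F →ₗ.[ℝ] ℝ) x ≤ clarkeDeriv φ f x := by
    rintro ⟨x, hx⟩
    obtain rfl : x = 0 := (Submodule.mem_bot ℝ).1 hx
    simp [aux_clarkeDeriv_zero]
  obtain ⟨glin, -, hgle⟩ :=
    exists_extension_of_le_sublinear ⟨⊥, 0⟩ (clarkeDeriv φ f) hhom hadd hdom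
  have hbound : ∀ x, |glin x| ≤ K * p0 x := by
    intro x
    rw [abs_le]
    constructor
    · have h1 := (hgle (-x)).trans (aux_clarkeDeriv_le p0 hU hL (-x))
      rw [map_neg, map_neg_eq_map] at h1
      linarith
    · exact (hgle x).trans (aux_clarkeDeriv_le p0 hU hL x)
  have hcont : Continuous glin := aux_cont_of_bound p0 hp0 glin hbound
  refine ⟨{ toLinearMap := glin, cont := hcont }, fun g => hgle g, fun x => hbound x⟩

lemma aux_isCompact_ball (p0 : Seminorm ℝ F) (hp0 : Continuous p0) (K : ℝ) :
    IsCompact {y : WeakDual ℝ F | ∀ x, |y x| ≤ K * p0 x} := by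
  set e : WeakDual ℝ F → (F → ℝ) := fun v x => topDualPairing ℝ F v x with he
  have hemb : Topology.IsEmbedding e :=
    WeakBilin.isEmbedding ContinuousLinearMap.coe_injective
  rw [hemb.isCompact_iff]
  have himg : e '' {y : WeakDual ℝ F | ∀ x, |y x| ≤ K * p0 x}
      = {u : F → ℝ | (∀ a b : F, u (a + b) = u a + u b) ∧
          (∀ (c : ℝ) (a : F), u (c • a) = c * u a) ∧ ∀ x, |u x| ≤ K * p0 x} := by
    ext u
    constructor
    · rintro ⟨y, hy, rfl⟩
      refine ⟨fun a b => ?_, fun c a => ?_, fun x => ?_⟩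
      · simp [he, topDualPairing_apply, map_add]
      · simp [he, topDualPairing_apply, map_smul]
      · exact hy x
    · rintro ⟨h1, h2, h3⟩
      let gl : F →ₗ[ℝ] ℝ :=
        { toFun := u, map_add' := h1, map_smul' := fun c a => h2 c a }
      exact ⟨(ContinuousLinearMap.mk gl (aux_cont_of_bound p0 hp0 gl h3) : F →L[ℝ] ℝ),
        fun x => h3 x, rfl⟩
  rw [himg]
  have hQ : IsCompact (Set.pi Set.univ fun x : F => Set.Icc (-(K * p0 x)) (K * p0 x)) :=
    isCompact_univ_pi fun x => isCompact_Icc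
  refine hQ.of_isClosed_subset ?_ ?_
  · have hc1 : IsClosed {u : F → ℝ | ∀ a b : F, u (a + b) = u a + u b} := by
      have h : {u : F → ℝ | ∀ a b : F, u (a + b) = u a + u b}
          = ⋂ (a : F) (b : F), {u : F → ℝ | u (a + b) = u a + u b} := by
        ext u; simp
      rw [h]
      exact isClosed_iInter fun a => isClosed_iInter fun b =>
        isClosed_eq (continuous_apply (a + b)) ((continuous_apply a).add (continuous_apply b))
    have hc2 : IsClosed {u : F → ℝ | ∀ (c : ℝ) (a : F), u (c • a) = c * u a} := by
      have h : {u : F → ℝ | ∀ (c : ℝ) (a : F), u (c • a) = c * u a}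
          = ⋂ (c : ℝ) (a : F), {u : F → ℝ | u (c • a) = c * u a} := by
        ext u; simp
      rw [h]
      exact isClosed_iInter fun c => isClosed_iInter fun a =>
        isClosed_eq (continuous_apply (c • a)) (continuous_const.mul (continuous_apply a))
    have hc3 : IsClosed {u : F → ℝ | ∀ x, |u x| ≤ K * p0 x} := by
      have h : {u : F → ℝ | ∀ x, |u x| ≤ K * p0 x}
          = ⋂ (x : F), {u : F → ℝ | |u x| ≤ K * p0 x} := by
        ext u; simp
      rw [h]
      exact isClosed_iInter fun x => isClosed_le ((continuous_apply x).abs) continuous_const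
    have hset : {u : F → ℝ | (∀ a b : F, u (a + b) = u a + u b) ∧
          (∀ (c : ℝ) (a : F), u (c • a) = c * u a) ∧ ∀ x, |u x| ≤ K * p0 x}
        = {u : F → ℝ | ∀ a b : F, u (a + b) = u a + u b}
          ∩ ({u : F → ℝ | ∀ (c : ℝ) (a : F), u (c • a) = c * u a}
            ∩ {u : F → ℝ | ∀ x, |u x| ≤ K * p0 x}) := by
      ext u
      simp only [Set.mem_setOf_eq, Set.mem_inter_iff]
    rw [hset]
    exact hc1.inter (hc2.inter hc3)
  · intro u hu
    intro x _
    exact Set.mem_Icc.2 (abs_le.1 (hu.2.2 x))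

/-- Upper semicontinuity of the Clarke derivative in the base point. -/
lemma aux_usc (p : ℕ → Seminorm ℝ F) {φ : F → ℝ} (hφ : LocLip p φ) (f₀ g : F) {ε : ℝ}
    (hε : 0 < ε) :
    ∀ᶠ f in 𝓝 f₀, clarkeDeriv φ f g ≤ clarkeDeriv φ f₀ g + ε := by
  obtain ⟨U, hU, K, hK, hL⟩ := hφ f₀
  have hbdd := aux_bddAbove (p 0) hU hL g
  have hev : ∀ᶠ q in (𝓝 f₀) ×ˢ (𝓝[>] (0:ℝ)), auxDQ φ g q < clarkeDeriv φ f₀ g + ε := by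
    refine eventually_lt_of_limsup_lt ?_ hbdd
    rw [← auxDQ_limsup]
    linarith
  rw [Filter.eventually_iff, Filter.mem_prod_iff] at hev
  obtain ⟨W, hW, V, hV, hWV⟩ := hev
  filter_upwards [interior_mem_nhds.2 hW] with f hf
  obtain ⟨U', hU', K', hK', hL'⟩ := hφ f
  rw [auxDQ_limsup]
  refine limsup_le_of_le ((aux_bddBelow (p 0) hU' hL' g).isCoboundedUnder_le) ?_
  have hWf : W ∈ 𝓝 f := mem_interior_iff_mem_nhds.1 hf
  have hmem : W ×ˢ V ∈ (𝓝 f) ×ˢ (𝓝[>] (0:ℝ)) := prod_mem_prod hWf hV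
  filter_upwards [hmem] with q hq
  exact le_of_lt (hWV hq)

lemma aux_dualSeminorm_nonneg (s : Finset F) (y : WeakDual ℝ F) : 0 ≤ dualSeminorm s y :=
  Real.iSup_nonneg fun _ => Real.iSup_nonneg fun _ => abs_nonneg _

lemma aux_dualSeminorm_le {s : Finset F} {y : WeakDual ℝ F} {c : ℝ}
    (h : ∀ x ∈ s, |y x| ≤ c) (hc : 0 ≤ c) : dualSeminorm s y ≤ c :=
  Real.iSup_le (fun x => Real.iSup_le (fun hx => h x hx) hc) hc

lemma aux_le_dualSeminorm {s : Finset F} (y : WeakDual ℝ F) {x : F} (hx : x ∈ s) :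
    |y x| ≤ dualSeminorm s y := by
  have hbdd : BddAbove (Set.range fun z : F => ⨆ _ : z ∈ s, |y z|) := by
    refine ⟨∑ w ∈ s, |y w|, ?_⟩
    rintro r ⟨z, rfl⟩
    show (⨆ _ : z ∈ s, |y z| : ℝ) ≤ ∑ w ∈ s, |y w|
    by_cases hz : z ∈ s
    · rw [ciSup_pos (f := fun _ : z ∈ s => |y z|) hz]
      exact Finset.single_le_sum (f := fun w => |y w|) (fun w _ => abs_nonneg _) hz
    · haveI : IsEmpty (z ∈ s) := ⟨fun h => hz h⟩
      rw [Real.iSup_of_isEmpty]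
      exact Finset.sum_nonneg fun w _ => abs_nonneg _
  calc |y x| = ⨆ _ : x ∈ s, |y x| := (ciSup_pos (f := fun _ : x ∈ s => |y x|) hx).symm
    _ ≤ ⨆ z : F, ⨆ _ : z ∈ s, |y z| := le_ciSup hbdd x
    _ = dualSeminorm s y := rfl

lemma aux_lam_nonneg (φ : F → ℝ) (s : Finset F) (f : F) : 0 ≤ lam φ s f :=
  Real.sInf_nonneg (by rintro r ⟨y, -, rfl⟩; exact aux_dualSeminorm_nonneg s y)

lemma aux_lam_le {φ : F → ℝ} {s : Finset F} {f : F} {y : WeakDual ℝ F}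
    (hy : y ∈ clarkeSubdiff φ f) : lam φ s f ≤ dualSeminorm s y := by
  refine csInf_le ⟨0, ?_⟩ ⟨y, hy, rfl⟩
  rintro r ⟨y', -, rfl⟩
  exact aux_dualSeminorm_nonneg s y'

end Aux
/-- sequential lower semicontinuity of `λ_{φ,ϕ}`. -/
theorem lam_sequentially_lsc
    {F : Type*} [AddCommGroup F] [Module ℝ F] [UniformSpace F] [IsUniformAddGroup F]
    [ContinuousSMul ℝ F] [CompleteSpace F]
    (p : ℕ → Seminorm ℝ F) (hmono : Monotone p) (hsp : WithSeminorms p)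
    (φ : F → ℝ) (hφ : LocLip p φ)
    (s : Finset F) (fseq : ℕ → F) (f₀ : F)
    (hconv : Filter.Tendsto fseq Filter.atTop (𝓝 f₀)) :
    lam φ s f₀ ≤ Filter.liminf (fun n => lam φ s (fseq n)) Filter.atTop := by
  classical
  obtain ⟨U, hU, K, hK, hL⟩ := hφ f₀
  have hp0 : Continuous (p 0) := hsp.continuous_seminorm 0
  set L := Filter.liminf (fun n => lam φ s (fseq n)) Filter.atTop with hLdef
  -- eventually the sequence is in the interior of U
  have hevU : ∀ᶠ n in Filter.atTop, fseq n ∈ interior U :=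
    hconv.eventually_mem (interior_mem_nhds.2 hU)
  -- subdifferential elements at points of `interior U` are uniformly bounded
  have hPmem : ∀ f ∈ interior U, ∀ y ∈ clarkeSubdiff φ f, ∀ x, |y x| ≤ K * p 0 x := by
    intro f hf y hy x
    have hUf : U ∈ 𝓝 f := mem_interior_iff_mem_nhds.1 hf
    have h1 : y x ≤ K * p 0 x := (hy x).trans (aux_clarkeDeriv_le (p 0) hUf hL x)
    have h2 := (hy (-x)).trans (aux_clarkeDeriv_le (p 0) hUf hL (-x))
    rw [map_neg, map_neg_eq_map] at h2
    rw [abs_le]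
    constructor <;> linarith
  -- the subdifferential is nonempty at points of `interior U`
  have hne : ∀ f ∈ interior U, ∃ y : WeakDual ℝ F, y ∈ clarkeSubdiff φ f := by
    intro f hf
    obtain ⟨y, hy, -⟩ :=
      aux_exists_subdiff (p 0) hp0 (mem_interior_iff_mem_nhds.1 hf) hL
    exact ⟨y, hy⟩
  -- a uniform bound for `dualSeminorm s` on such elements
  set M : ℝ := ∑ x ∈ s, K * p 0 x with hMdef
  have hM0 : 0 ≤ M := Finset.sum_nonneg fun x _ => mul_nonneg hK (apply_nonneg _ _)
  have hρM : ∀ y : WeakDual ℝ F, (∀ x, |y x| ≤ K * p 0 x) → dualSeminorm s y ≤ M := by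
    intro y hy
    refine aux_dualSeminorm_le ?_ hM0
    intro x hx
    exact (hy x).trans (Finset.single_le_sum (f := fun z => K * p 0 z)
      (fun z _ => mul_nonneg hK (apply_nonneg (p 0) z)) hx)
  -- `lam` along the sequence is eventually bounded above
  have hlamM : ∀ᶠ n in Filter.atTop, lam φ s (fseq n) ≤ M := by
    filter_upwards [hevU] with n hn
    obtain ⟨y, hy⟩ := hne _ hn
    exact (aux_lam_le hy).trans (hρM y (hPmem _ hn y hy))
  have hbdd_below : Filter.IsBoundedUnder (· ≥ ·) Filter.atTop
      (fun n => lam φ s (fseq n)) :=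
    ⟨0, by
      rw [Filter.eventually_map]
      exact Filter.Eventually.of_forall fun n => aux_lam_nonneg φ s (fseq n)⟩
  have hbdd_above : Filter.IsBoundedUnder (· ≤ ·) Filter.atTop
      (fun n => lam φ s (fseq n)) :=
    ⟨M, by rw [Filter.eventually_map]; exact hlamM⟩
  have hL0 : 0 ≤ L := by
    refine Filter.le_liminf_of_le hbdd_above.isCoboundedUnder_ge ?_
    exact Filter.Eventually.of_forall fun n => aux_lam_nonneg φ s (fseq n)
  -- compactness setup
  set P : Set (WeakDual ℝ F) := {y | ∀ x, |y x| ≤ K * p 0 x} with hPdef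
  have hPcomp : IsCompact P := aux_isCompact_ball (p 0) hp0 K
  set Z : (F × ℕ) ⊕ (F × ℕ) → Set (WeakDual ℝ F) := fun i =>
    match i with
    | Sum.inl (g, m) => {y | y g ≤ clarkeDeriv φ f₀ g + 1 / (m + 1)}
    | Sum.inr (x, m) => {y | x ∈ s → |y x| ≤ L + 1 / (m + 1)} with hZdef
  have hZclosed : ∀ i, IsClosed (Z i) := by
    rintro (⟨g, m⟩ | ⟨x, m⟩)
    · exact isClosed_le (WeakDual.eval_continuous g) continuous_const
    · by_cases hx : x ∈ s
      · have h : Z (Sum.inr (x, m)) = {y : WeakDual ℝ F | |y x| ≤ L + 1 / (m + 1)} := by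
          ext y
          simp [hZdef, hx]
        rw [h]
        exact isClosed_le ((WeakDual.eval_continuous x).abs) continuous_const
      · have h : Z (Sum.inr (x, m)) = Set.univ := by
          ext y
          simp [hZdef, hx]
        rw [h]
        exact isClosed_univ
  -- finite intersection property
  have hFIP : ∀ t : Finset ((F × ℕ) ⊕ (F × ℕ)), (P ∩ ⋂ i ∈ t, Z i).Nonempty := by
    intro t
    set N : ℕ := t.sup (fun i => match i with
      | Sum.inl (_, m) => m
      | Sum.inr (_, m) => m) with hNdef
    set ε : ℝ := 1 / (N + 1) with hεdef
    have hεpos : 0 < ε := by positivity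
    have hεle : ∀ m : ℕ, m ≤ N → ε ≤ 1 / ((m : ℝ) + 1) := by
      intro m hm
      apply one_div_le_one_div_of_le (by positivity)
      exact_mod_cast Nat.add_le_add_right hm 1
    have hev1 : ∀ᶠ f in 𝓝 f₀, ∀ i ∈ t,
        (match i with
         | Sum.inl (g, _) => clarkeDeriv φ f g ≤ clarkeDeriv φ f₀ g + ε
         | Sum.inr _ => True) := by
      rw [Filter.eventually_all_finset]
      rintro (⟨g, m⟩ | ⟨x, m⟩) hi
      · exact aux_usc p hφ f₀ g hεpos
      · exact Filter.Eventually.of_forall fun _ => trivial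
    have hevseq : ∀ᶠ n in Filter.atTop, fseq n ∈ interior U ∧ ∀ i ∈ t,
        (match i with
         | Sum.inl (g, _) => clarkeDeriv φ (fseq n) g ≤ clarkeDeriv φ f₀ g + ε
         | Sum.inr _ => True) :=
      hevU.and (hconv.eventually hev1)
    have hfreq : ∃ᶠ n in Filter.atTop, lam φ s (fseq n) < L + ε := by
      refine Filter.frequently_lt_of_liminf_lt hbdd_above.isCoboundedUnder_ge ?_
      rw [← hLdef]
      linarith
    obtain ⟨n, hn1, hnU, hnt⟩ := (hfreq.and_eventually hevseq).exists
    have himg_ne : (dualSeminorm s '' clarkeSubdiff φ (fseq n)).Nonempty := by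
      obtain ⟨y, hy⟩ := hne _ hnU
      exact ⟨_, y, hy, rfl⟩
    have hlt : sInf (dualSeminorm s '' clarkeSubdiff φ (fseq n)) < L + ε := by
      rw [show sInf (dualSeminorm s '' clarkeSubdiff φ (fseq n)) = lam φ s (fseq n) from rfl]
      exact hn1
    obtain ⟨r, ⟨y, hy, rfl⟩, hr⟩ := exists_lt_of_csInf_lt himg_ne hlt
    refine ⟨y, fun x => hPmem _ hnU y hy x, ?_⟩
    rw [Set.mem_iInter₂]
    rintro (⟨g, m⟩ | ⟨x, m⟩) hi
    · have h1 : y g ≤ clarkeDeriv φ (fseq n) g := hy g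
      have h2 := hnt _ hi
      have h3 : ε ≤ 1 / ((m : ℝ) + 1) := by
        refine hεle m ?_
        exact Finset.le_sup (f := fun i => match i with
          | Sum.inl (_, m) => m
          | Sum.inr (_, m) => m) hi
      show y g ≤ clarkeDeriv φ f₀ g + 1 / ((m : ℝ) + 1)
      simp only at h2
      linarith
    · intro hx
      have h1 : |y x| ≤ dualSeminorm s y := aux_le_dualSeminorm y hx
      have h3 : ε ≤ 1 / ((m : ℝ) + 1) := by
        refine hεle m ?_
        exact Finset.le_sup (f := fun i => match i with
          | Sum.inl (_, m) => m
          | Sum.inr (_, m) => m) hi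
      show |y x| ≤ L + 1 / ((m : ℝ) + 1)
      linarith
  -- apply compactness
  obtain ⟨y, hyP, hyZ⟩ := hPcomp.inter_iInter_nonempty Z hZclosed hFIP
  rw [Set.mem_iInter] at hyZ
  have hysub : y ∈ clarkeSubdiff φ f₀ := by
    intro g
    by_contra hcon
    push_neg at hcon
    obtain ⟨m, hm⟩ := exists_nat_one_div_lt (sub_pos.2 hcon)
    have h1 : y g ≤ clarkeDeriv φ f₀ g + 1 / ((m : ℝ) + 1) := hyZ (Sum.inl (g, m))
    linarith
  have hyρ : dualSeminorm s y ≤ L := by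
    refine aux_dualSeminorm_le ?_ hL0
    intro x hx
    by_contra hcon
    push_neg at hcon
    obtain ⟨m, hm⟩ := exists_nat_one_div_lt (sub_pos.2 hcon)
    have h1 : |y x| ≤ L + 1 / ((m : ℝ) + 1) := hyZ (Sum.inr (x, m)) hx
    linarith
  calc lam φ s f₀ ≤ dualSeminorm s y := aux_lam_le hysub
    _ ≤ L := hyρ
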